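/- Let x, y be elements of the graph group G_F with x ≤ y, and let α be a symbol that does not occur in x⁻¹y. Then |xp⁻¹| ≤ |yp⁻¹| for each α-peak p. -/

import Mathlib

open Pointwise

namespace GraphGroupPaper

/-- The set of commutator relators: `gᵢ` and `gⱼ` commute for every pair of distinct
`i, j` with `{i,j} ∉ F`. -/
def Rels (k : ℕ) (F : Set (Sym2 (Fin k))) : Set (FreeGroup (Fin k)) :=
  {w | ∃ i j : Fin k, i ≠ j ∧ s(i, j) ∉ F ∧
      w = FreeGroup.of i * FreeGroup.of j * (FreeGroup.of i)⁻¹ * (FreeGroup.of j)⁻¹}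

/-- The graph group `G_F` with generators `g₁, …, g_k` and relations `gᵢgⱼ = gⱼgᵢ`
for all distinct `i, j` with `{i,j} ∉ F`. -/
abbrev Grp (k : ℕ) (F : Set (Sym2 (Fin k))) := PresentedGroup (Rels k F)

/-- The generator `gᵢ` of the graph group. -/
def gen (k : ℕ) (F : Set (Sym2 (Fin k))) (i : Fin k) : Grp k F :=
  PresentedGroup.of i

/-- The group element corresponding to a symbol: `(i, true)` stands for `gᵢ`,
`(i, false)` stands for `gᵢ⁻¹`. -/
def sym (k : ℕ) (F : Set (Sym2 (Fin k))) (α : Fin k × Bool) : Grp k F :=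
  if α.2 then gen k F α.1 else (gen k F α.1)⁻¹

/-- The product of the word `l` of symbols, as an element of the graph group. -/
def wordProd (k : ℕ) (F : Set (Sym2 (Fin k))) (l : List (Fin k × Bool)) : Grp k F :=
  (l.map (sym k F)).prod

/-- `|x|` : the length of a shortest word in the symbols representing `x`. -/
noncomputable def len {k : ℕ} {F : Set (Sym2 (Fin k))} (x : Grp k F) : ℕ :=
  sInf {n | ∃ l : List (Fin k × Bool), wordProd k F l = x ∧ l.length = n}

/-- The partial order on `G_F`:  `x ≤ y` iff `|y| = |x| + |x⁻¹y|`. -/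
def le {k : ℕ} {F : Set (Sym2 (Fin k))} (x y : Grp k F) : Prop :=
  len y = len x + len (x⁻¹ * y)

/-- `m` is the meet `x ∧ y` (greatest lower bound w.r.t. `le`). -/
def IsMeet {k : ℕ} {F : Set (Sym2 (Fin k))} (x y m : Grp k F) : Prop :=
  le m x ∧ le m y ∧ ∀ w, le w x → le w y → le w m

/-- `j` is the (finite) join `x ∨ y` (least upper bound w.r.t. `le`);
`x ∨ y` is finite iff such a `j` exists. -/
def IsJoin {k : ℕ} {F : Set (Sym2 (Fin k))} (x y j : Grp k F) : Prop :=
  le x j ∧ le y j ∧ ∀ w, le x w → le y w → le j w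

/-- `j` is the (finite) join of the set `S`. -/
def IsJoinSet {k : ℕ} {F : Set (Sym2 (Fin k))} (S : Set (Grp k F)) (j : Grp k F) : Prop :=
  (∀ s ∈ S, le s j) ∧ ∀ w, (∀ s ∈ S, le s w) → le j w

/-- `y` is a segment of `a` if `a = x·y·z` for some `x, z`. -/
def Segment {k : ℕ} {F : Set (Sym2 (Fin k))} (y a : Grp k F) : Prop :=
  ∃ x z, a = x * y * z ∧ len a = len x + len y + len z

/-- The left-invariant metric `dist(x,y) = |x⁻¹y|`. -/
noncomputable def dist {k : ℕ} {F : Set (Sym2 (Fin k))} (x y : Grp k F) : ℕ :=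
  len (x⁻¹ * y)

/-- A nonempty set `L` is convex if `x, z ∈ L` and `dist(x,y) + dist(y,z) = dist(x,z)`
imply `y ∈ L`. -/
def ConvexSet {k : ℕ} {F : Set (Sym2 (Fin k))} (L : Set (Grp k F)) : Prop :=
  L.Nonempty ∧ ∀ x z y : Grp k F, x ∈ L → z ∈ L →
    dist x y + dist y z = dist x z → y ∈ L

/-- An ideal: nonempty, downward closed, and closed under finite joins. -/
def IdealSet {k : ℕ} {F : Set (Sym2 (Fin k))} (I : Set (Grp k F)) : Prop :=
  I.Nonempty ∧ (∀ x ∈ I, ∀ y, le y x → y ∈ I) ∧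
    (∀ x ∈ I, ∀ y ∈ I, ∀ j, IsJoin x y j → j ∈ I)

/-- `H` is closed if both `H` and `H⁻¹` are ideals. -/
def ClosedSet {k : ℕ} {F : Set (Sym2 (Fin k))} (H : Set (Grp k F)) : Prop :=
  IdealSet H ∧ IdealSet H⁻¹

/-- `m` is a minimal element of `S` w.r.t. `le`. -/
def MinimalIn {k : ℕ} {F : Set (Sym2 (Fin k))} (S : Set (Grp k F)) (m : Grp k F) : Prop :=
  m ∈ S ∧ ∀ x ∈ S, le x m → x = m

/-- `l` is a reduced (i.e. shortest) word representing `x`. -/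
def MinWord {k : ℕ} {F : Set (Sym2 (Fin k))} (x : Grp k F) (l : List (Fin k × Bool)) : Prop :=
  wordProd k F l = x ∧ l.length = len x

open Classical in
/-- `#_α(x)`: the number of occurrences of the symbol `α` (not counting `α⁻¹`)
in a reduced word representing `x`. -/
noncomputable def symCount {k : ℕ} {F : Set (Sym2 (Fin k))} (α : Fin k × Bool)
    (x : Grp k F) : ℕ :=
  if h : ∃ l, MinWord x l then h.choose.count α else 0

/-- The symbol `α` occurs in `x`. -/
def Occurs {k : ℕ} {F : Set (Sym2 (Fin k))} (α : Fin k × Bool) (x : Grp k F) : Prop :=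
  0 < symCount α x

/-- `α` is a maximal symbol of `x`, i.e. `xα⁻¹ ≤ x`. -/
def MaxSym {k : ℕ} {F : Set (Sym2 (Fin k))} (α : Fin k × Bool) (x : Grp k F) : Prop :=
  le (x * (sym k F α)⁻¹) x

/-- A peak: an element with precisely one maximal symbol. -/
def IsPeak {k : ℕ} {F : Set (Sym2 (Fin k))} (p : Grp k F) : Prop :=
  ∃! α : Fin k × Bool, MaxSym α p

/-- An `α`-peak: a peak whose unique maximal symbol is `α`. -/
def AlphaPeak {k : ℕ} {F : Set (Sym2 (Fin k))} (α : Fin k × Bool) (p : Grp k F) : Prop :=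
  MaxSym α p ∧ ∀ β, MaxSym β p → β = α

/-- The set of generator indices occurring in `b`. -/
def Support {k : ℕ} {F : Set (Sym2 (Fin k))} (b : Grp k F) : Set (Fin k) :=
  {i | Occurs (i, true) b ∨ Occurs (i, false) b}

/-- `b` is connected: the generators occurring in `b` induce a connected subgraph of
the graph `([k], F)`. -/
def Conn {k : ℕ} {F : Set (Sym2 (Fin k))} (b : Grp k F) : Prop :=
  (SimpleGraph.induce (Support b) (SimpleGraph.fromEdgeSet F)).Connected

/-- `b` is cyclically reduced: `b ∧ b⁻¹ = 1`. -/
def CycRed {k : ℕ} {F : Set (Sym2 (Fin k))} (b : Grp k F) : Prop :=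
  IsMeet b b⁻¹ 1

/-! ### Letters -/

variable {k : ℕ} {F : Set (Sym2 (Fin k))}

/-- inverse of a letter -/
def linv (a : Fin k × Bool) : Fin k × Bool := (a.1, !a.2)

@[simp] lemma linv_linv (a : Fin k × Bool) : linv (linv a) = a := by
  cases a; simp [linv]

@[simp] lemma linv_fst (a : Fin k × Bool) : (linv a).1 = a.1 := rfl

lemma linv_inj {a b : Fin k × Bool} (h : linv a = linv b) : a = b := by
  have := congrArg linv h; simpa using this

/-- two letters commute -/
def comm (F : Set (Sym2 (Fin k))) (a b : Fin k × Bool) : Prop :=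
  a.1 ≠ b.1 ∧ s(a.1, b.1) ∉ F

lemma comm_symm {a b : Fin k × Bool} (h : comm F a b) : comm F b a := by
  obtain ⟨h1, h2⟩ := h
  exact ⟨h1.symm, by rwa [Sym2.eq_swap]⟩

@[simp] lemma comm_linv_left {a b : Fin k × Bool} : comm F (linv a) b ↔ comm F a b := Iff.rfl

@[simp] lemma comm_linv_right {a b : Fin k × Bool} : comm F a (linv b) ↔ comm F a b := Iff.rfl

lemma comm_ne {a b : Fin k × Bool} (h : comm F a b) : a ≠ b := by
  intro e; exact h.1 (by rw [e])

lemma comm_ne_linv {a b : Fin k × Bool} (h : comm F a b) : b ≠ linv a := by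
  intro e; apply h.1; rw [e]; rfl

/-! ### swap equivalence -/

def Step (F : Set (Sym2 (Fin k))) (l l' : List (Fin k × Bool)) : Prop :=
  ∃ A B a b, comm F a b ∧ l = A ++ a :: b :: B ∧ l' = A ++ b :: a :: B

def Rel (F : Set (Sym2 (Fin k))) : List (Fin k × Bool) → List (Fin k × Bool) → Prop :=
  Relation.ReflTransGen (Step F)

lemma Step.symm {l m : List (Fin k × Bool)} (h : Step F l m) : Step F m l := by
  obtain ⟨A, B, a, b, hc, h1, h2⟩ := h
  exact ⟨A, B, b, a, comm_symm hc, h2, h1⟩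

lemma Rel.refl (l : List (Fin k × Bool)) : Rel F l l := Relation.ReflTransGen.refl

lemma Rel.of_step {l m : List (Fin k × Bool)} (h : Step F l m) : Rel F l m :=
  Relation.ReflTransGen.single h

lemma Rel.trans {l m n : List (Fin k × Bool)} (h1 : Rel F l m) (h2 : Rel F m n) : Rel F l n :=
  Relation.ReflTransGen.trans h1 h2

lemma Rel.symm {l m : List (Fin k × Bool)} (h : Rel F l m) : Rel F m l := by
  induction h with
  | refl => exact Rel.refl _
  | tail _ h2 ih => exact Rel.trans (Rel.of_step h2.symm) ih

lemma Step.append_left {l m : List (Fin k × Bool)} (C : List (Fin k × Bool)) (h : Step F l m) :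
    Step F (C ++ l) (C ++ m) := by
  obtain ⟨A, B, a, b, hc, h1, h2⟩ := h
  exact ⟨C ++ A, B, a, b, hc, by simp [h1], by simp [h2]⟩

lemma Step.append_right {l m : List (Fin k × Bool)} (C : List (Fin k × Bool)) (h : Step F l m) :
    Step F (l ++ C) (m ++ C) := by
  obtain ⟨A, B, a, b, hc, h1, h2⟩ := h
  exact ⟨A, B ++ C, a, b, hc, by simp [h1], by simp [h2]⟩

lemma Rel.append_left {l m : List (Fin k × Bool)} (C : List (Fin k × Bool)) (h : Rel F l m) :
    Rel F (C ++ l) (C ++ m) :=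
  Relation.ReflTransGen.lift _ (fun _ _ h => Step.append_left C h) _ _ h

lemma Rel.append_right {l m : List (Fin k × Bool)} (C : List (Fin k × Bool)) (h : Rel F l m) :
    Rel F (l ++ C) (m ++ C) :=
  Relation.ReflTransGen.lift _ (fun _ _ h => Step.append_right C h) _ _ h

lemma Rel.append {l m l' m' : List (Fin k × Bool)} (h : Rel F l m) (h' : Rel F l' m') :
    Rel F (l ++ l') (m ++ m') :=
  (h.append_right l').trans (Rel.append_left m h')

lemma Rel.cons {l m : List (Fin k × Bool)} (c : Fin k × Bool) (h : Rel F l m) :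
    Rel F (c :: l) (c :: m) := by
  simpa using h.append_left [c]

lemma Step.perm {l m : List (Fin k × Bool)} (h : Step F l m) : l.Perm m := by
  obtain ⟨A, B, a, b, _, h1, h2⟩ := h
  subst h1; subst h2
  exact List.Perm.append_left A (List.Perm.swap b a B)

lemma Rel.perm {l m : List (Fin k × Bool)} (h : Rel F l m) : l.Perm m := by
  induction h with
  | refl => exact List.Perm.refl _
  | tail _ h2 ih => exact ih.trans h2.perm

lemma Rel.length {l m : List (Fin k × Bool)} (h : Rel F l m) : l.length = m.length :=
  h.perm.length_eq

/-- number of occurrences of a letter -/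
def cnt (a : Fin k × Bool) (l : List (Fin k × Bool)) : ℕ :=
  l.countP (fun c => decide (c = a))

lemma Rel.cnt_eq {l m : List (Fin k × Bool)} (h : Rel F l m) (a : Fin k × Bool) :
    cnt a l = cnt a m :=
  h.perm.countP_eq _

@[simp] lemma cnt_nil (a : Fin k × Bool) : cnt a ([] : List (Fin k × Bool)) = 0 := rfl

lemma cnt_cons (a c : Fin k × Bool) (l : List (Fin k × Bool)) :
    cnt a (c :: l) = cnt a l + (if c = a then 1 else 0) := by
  simp [cnt, List.countP_cons]

/-! ### wordProd basics -/

@[simp] lemma wordProd_nil : wordProd k F [] = 1 := rfl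

@[simp] lemma wordProd_cons (a : Fin k × Bool) (l : List (Fin k × Bool)) :
    wordProd k F (a :: l) = sym k F a * wordProd k F l := by
  simp [wordProd]

@[simp] lemma wordProd_append (l m : List (Fin k × Bool)) :
    wordProd k F (l ++ m) = wordProd k F l * wordProd k F m := by
  simp [wordProd]

@[simp] lemma wordProd_singleton (a : Fin k × Bool) :
    wordProd k F [a] = sym k F a := by simp

@[simp] lemma sym_linv (a : Fin k × Bool) : sym k F (linv a) = (sym k F a)⁻¹ := by
  obtain ⟨i, b⟩ := a
  cases b <;> simp [sym, linv]

lemma gen_commute {i j : Fin k} (hij : i ≠ j) (hF : s(i, j) ∉ F) :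
    Commute (gen k F i) (gen k F j) := by
  have hr : (FreeGroup.of i * FreeGroup.of j * (FreeGroup.of i)⁻¹ * (FreeGroup.of j)⁻¹ :
      FreeGroup (Fin k)) ∈ Rels k F := ⟨i, j, hij, hF, rfl⟩
  have h1 : PresentedGroup.mk (Rels k F)
      (FreeGroup.of i * FreeGroup.of j * (FreeGroup.of i)⁻¹ * (FreeGroup.of j)⁻¹) = 1 := by
    have : (FreeGroup.of i * FreeGroup.of j * (FreeGroup.of i)⁻¹ * (FreeGroup.of j)⁻¹ :
        FreeGroup (Fin k)) ∈ Subgroup.normalClosure (Rels k F) :=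
      Subgroup.subset_normalClosure hr
    exact (QuotientGroup.eq_one_iff _).2 this
  have h2 : gen k F i * gen k F j * (gen k F i)⁻¹ * (gen k F j)⁻¹ = 1 := by
    simpa [gen, PresentedGroup.of, map_mul, map_inv] using h1
  have := mul_eq_one_iff_eq_inv.mp h2
  unfold Commute SemiconjBy
  group at this ⊢
  calc gen k F i * gen k F j = (gen k F i * gen k F j * (gen k F i)⁻¹ * (gen k F j)⁻¹) *
        (gen k F j * gen k F i) := by group
  _ = gen k F j * gen k F i := by rw [h2]; group

lemma sym_commute {a b : Fin k × Bool} (h : comm F a b) : Commute (sym k F a) (sym k F b) := by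
  have base : Commute (gen k F a.1) (gen k F b.1) := gen_commute h.1 h.2
  obtain ⟨i, ba⟩ := a; obtain ⟨j, bb⟩ := b
  cases ba <;> cases bb <;>
    simp only [sym] <;>
    first
      | exact base
      | exact base.inv_left
      | exact base.inv_right
      | exact base.inv_left.inv_right

lemma Step.wordProd_eq {l m : List (Fin k × Bool)} (h : Step F l m) :
    wordProd k F l = wordProd k F m := by
  obtain ⟨A, B, a, b, hc, h1, h2⟩ := h
  subst h1; subst h2
  simp [mul_assoc, ← mul_assoc (sym k F a), (sym_commute hc).eq]

lemma Rel.wordProd_eq {l m : List (Fin k × Bool)} (h : Rel F l m) :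
    wordProd k F l = wordProd k F m := by
  induction h with
  | refl => rfl
  | tail _ h2 ih => exact ih.trans h2.wordProd_eq

/-! ### projections and cancellation -/

/-- projection onto the two-letter subalphabet `{a, b}` -/
def proj (a b : Fin k × Bool) (l : List (Fin k × Bool)) : List (Fin k × Bool) :=
  l.filter (fun c => decide (c = a ∨ c = b))

@[simp] lemma proj_nil (a b : Fin k × Bool) : proj a b [] = [] := rfl

lemma proj_cons (a b c : Fin k × Bool) (l : List (Fin k × Bool)) :
    proj a b (c :: l) = if (c = a ∨ c = b) then c :: proj a b l else proj a b l := by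
  simp only [proj, List.filter_cons]
  by_cases h : c = a ∨ c = b <;> simp [h]

lemma proj_append (a b : Fin k × Bool) (l m : List (Fin k × Bool)) :
    proj a b (l ++ m) = proj a b l ++ proj a b m := by
  simp [proj, List.filter_append]

lemma Step.proj_eq {l m : List (Fin k × Bool)} (h : Step F l m) {a b : Fin k × Bool}
    (hd : ¬ comm F a b) : proj a b l = proj a b m := by
  obtain ⟨A, B, x, y, hc, h1, h2⟩ := h
  subst h1; subst h2
  simp only [proj_append, proj_cons]
  by_cases hx : x = a ∨ x = b <;> by_cases hy : y = a ∨ y = b <;> simp [hx, hy]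
  -- remaining case : both kept
  · -- x,y ∈ {a,b} and comm x y; show x = y
    rcases hx with hx | hx <;> rcases hy with hy | hy <;> subst hx <;> subst hy
    · exact ⟨rfl, rfl⟩
    · exact absurd hc hd
    · exact absurd (comm_symm hc) hd
    · exact ⟨rfl, rfl⟩

lemma Rel.proj_eq {l m : List (Fin k × Bool)} (h : Rel F l m) {a b : Fin k × Bool}
    (hd : ¬ comm F a b) : proj a b l = proj a b m := by
  induction h with
  | refl => rfl
  | tail _ h2 ih => exact ih.trans (h2.proj_eq hd)

lemma not_comm_self (a : Fin k × Bool) : ¬ comm F a a := fun h => h.1 rfl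

lemma not_comm_linv (a : Fin k × Bool) : ¬ comm F a (linv a) := fun h => h.1 rfl

/-- first-occurrence decomposition -/
lemma exists_first_occ {c : Fin k × Bool} {m : List (Fin k × Bool)} (h : c ∈ m) :
    ∃ m₁ m₂, m = m₁ ++ c :: m₂ ∧ c ∉ m₁ := by
  induction m with
  | nil => cases h
  | cons d t ih =>
    by_cases hdc : d = c
    · exact ⟨[], t, by simp [hdc], by simp⟩
    · have : c ∈ t := by
        rcases List.mem_cons.1 h with h | h
        · exact absurd h.symm hdc
        · exact h
      obtain ⟨m₁, m₂, h1, h2⟩ := ih this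
      refine ⟨d :: m₁, m₂, by simp [h1], ?_⟩
      intro hmem
      rcases List.mem_cons.1 hmem with e | e
      · exact hdc e.symm
      · exact h2 e

/-- move a letter to the front past commuting letters -/
lemma rel_move_front {c : Fin k × Bool} {m₁ m₂ : List (Fin k × Bool)}
    (h : ∀ b ∈ m₁, comm F b c) : Rel F (m₁ ++ c :: m₂) (c :: (m₁ ++ m₂)) := by
  induction m₁ with
  | nil => exact Rel.refl _
  | cons d t ih =>
    have h1 : Rel F (d :: (t ++ c :: m₂)) (d :: c :: (t ++ m₂)) :=
      Rel.cons d (ih fun b hb => h b (List.mem_cons_of_mem d hb))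
    have h2 : Step F (d :: c :: (t ++ m₂)) (c :: d :: (t ++ m₂)) :=
      ⟨[], t ++ m₂, d, c, h d (List.mem_cons_self), rfl, rfl⟩
    exact (h1.trans (Rel.of_step h2))

lemma proj_first {b c : Fin k × Bool} : ∀ {m₁ : List (Fin k × Bool)},
    c ∉ m₁ → b ∈ m₁ → ∃ t, proj b c m₁ = b :: t := by
  intro m₁
  induction m₁ with
  | nil => intro _ hb; cases hb
  | cons d t iht =>
    intro hc hb
    by_cases hdb : d = b
    · exact ⟨proj b c t, by simp [proj_cons, hdb]⟩
    · have hdc : ¬ d = c := fun e => hc (by simp [e])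
      have hbt : b ∈ t := by
        rcases List.mem_cons.1 hb with h | h
        · exact absurd h.symm hdb
        · exact h
      obtain ⟨t', ht'⟩ := iht (fun e => hc (List.mem_cons_of_mem d e)) hbt
      exact ⟨t', by simp [proj_cons, hdb, hdc, ht']⟩

/-- hard direction of the projection lemma -/
lemma rel_of_proj : ∀ {l m : List (Fin k × Bool)},
    (∀ a b : Fin k × Bool, ¬ comm F a b → proj a b l = proj a b m) → Rel F l m := by
  intro l
  induction l with
  | nil =>
    intro m h
    cases m with
    | nil => exact Rel.refl _
    | cons c t =>
      exfalso
      have := h c c (not_comm_self c)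
      simp [proj_cons] at this
  | cons c l' ih =>
    intro m h
    have hcm : c ∈ m := by
      by_contra hc
      have := h c c (not_comm_self c)
      rw [proj_cons] at this
      simp only [or_self, if_pos rfl] at this
      have hcml : c ∈ proj c c m := by rw [← this]; exact List.mem_cons_self
      exact hc (List.mem_of_mem_filter hcml)
    obtain ⟨m₁, m₂, hm, hcm₁⟩ := exists_first_occ hcm
    have hcomm : ∀ b ∈ m₁, comm F b c := by
      intro b hb
      by_contra hbc
      have hbne : b ≠ c := fun e => hcm₁ (e ▸ hb)
      have hproj := h b c fun hcomm => hbc hcomm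
      -- lhs starts with c
      rw [proj_cons] at hproj
      simp only [or_true, if_pos] at hproj
      -- rhs starts with b
      obtain ⟨t, ht⟩ := proj_first hcm₁ hb
      rw [hm, proj_append, ht, proj_cons] at hproj
      simp only [or_true, if_pos] at hproj
      have : c = b := by
        have := congrArg List.head? hproj
        simpa using this
      exact hbne this.symm
    have hrel : Rel F m (c :: (m₁ ++ m₂)) := hm ▸ rel_move_front hcomm
    have hih : Rel F l' (m₁ ++ m₂) := by
      apply ih
      intro a b hd
      have h1 := h a b hd
      have h2 : proj a b m = proj a b (c :: (m₁ ++ m₂)) := hrel.proj_eq hd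
      rw [h2] at h1
      rw [proj_cons, proj_cons] at h1
      by_cases hc : c = a ∨ c = b
      · simp only [if_pos hc] at h1
        exact List.tail_eq_of_cons_eq h1
      · simpa [if_neg hc] using h1
    exact (Rel.cons c hih).trans hrel.symm

/-- right cancellation -/
lemma rel_snoc_cancel {l m : List (Fin k × Bool)} {c : Fin k × Bool}
    (h : Rel F (l ++ [c]) (m ++ [c])) : Rel F l m := by
  apply rel_of_proj
  intro a b hd
  have := h.proj_eq hd
  rw [proj_append, proj_append] at this
  exact List.append_cancel_right this

/-! ### maximal letters (front and end) -/

/-- `FM F d t` : `d` occurs in `t` and can be moved to the front. -/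
def FM (F : Set (Sym2 (Fin k))) (d : Fin k × Bool) : List (Fin k × Bool) → Prop
  | [] => False
  | c :: t => c = d ∨ (comm F d c ∧ FM F d t)

@[simp] lemma FM_nil (d : Fin k × Bool) : ¬ FM F d [] := fun h => h

lemma FM_cons {d c : Fin k × Bool} {t : List (Fin k × Bool)} :
    FM F d (c :: t) ↔ c = d ∨ (comm F d c ∧ FM F d t) := Iff.rfl

/-- remove the first occurrence of `d` -/
def fmErase (d : Fin k × Bool) : List (Fin k × Bool) → List (Fin k × Bool)
  | [] => []
  | c :: t => if c = d then t else c :: fmErase d t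

lemma fm_rel_front {d : Fin k × Bool} : ∀ {t : List (Fin k × Bool)},
    FM F d t → Rel F t (d :: fmErase d t) := by
  intro t
  induction t with
  | nil => intro h; cases h
  | cons c t ih =>
    intro h
    rcases h with h | ⟨h1, h2⟩
    · subst h; simp [fmErase]; exact Rel.refl _
    · have hcd : ¬ c = d := fun e => (comm_ne h1) e.symm
      have : Rel F (c :: t) (c :: (d :: fmErase d t)) := Rel.cons c (ih h2)
      refine this.trans ?_
      simp only [fmErase, if_neg hcd]
      exact Rel.of_step ⟨[], fmErase d t, c, d, comm_symm h1, rfl, rfl⟩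

lemma FM_append {d : Fin k × Bool} : ∀ {s t : List (Fin k × Bool)},
    FM F d (s ++ t) ↔ FM F d s ∨ ((∀ b ∈ s, comm F d b) ∧ FM F d t) := by
  intro s
  induction s with
  | nil => intro t; simp
  | cons c s ih =>
    intro t
    rw [List.cons_append, FM_cons, FM_cons, ih]
    constructor
    · rintro (h | ⟨h1, h2 | ⟨h3, h4⟩⟩)
      · exact Or.inl (Or.inl h)
      · exact Or.inl (Or.inr ⟨h1, h2⟩)
      · refine Or.inr ⟨?_, h4⟩
        intro b hb
        rcases List.mem_cons.1 hb with e | e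
        · exact e ▸ h1
        · exact h3 b e
    · rintro ((h | ⟨h1, h2⟩) | ⟨h1, h2⟩)
      · exact Or.inl h
      · exact Or.inr ⟨h1, Or.inl h2⟩
      · exact Or.inr ⟨h1 c (List.mem_cons_self), Or.inr ⟨fun b hb => h1 b
          (List.mem_cons_of_mem c hb), h2⟩⟩

lemma FM_swap_mp {x y d : Fin k × Bool} {B : List (Fin k × Bool)} (hc : comm F x y)
    (h : FM F d (x :: y :: B)) : FM F d (y :: x :: B) := by
  rcases h with h | ⟨h1, h2 | ⟨h3, h4⟩⟩
  · subst h
    exact Or.inr ⟨hc, Or.inl rfl⟩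
  · subst h2
    exact Or.inl rfl
  · exact Or.inr ⟨h3, Or.inr ⟨h1, h4⟩⟩

lemma FM_swap_append {x y d : Fin k × Bool} {B : List (Fin k × Bool)} (hc : comm F x y) :
    ∀ A, FM F d (A ++ x :: y :: B) → FM F d (A ++ y :: x :: B)
  | [], hf => FM_swap_mp hc hf
  | c :: A', hf => by
    rcases hf with h | ⟨h1, h2⟩
    · exact Or.inl h
    · exact Or.inr ⟨h1, FM_swap_append hc A' h2⟩

lemma Step.fm {l m : List (Fin k × Bool)} {d : Fin k × Bool} (h : Step F l m) (hf : FM F d l) :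
    FM F d m := by
  obtain ⟨A, B, x, y, hc, rfl, rfl⟩ := h
  exact FM_swap_append hc A hf

lemma Rel.fm {l m : List (Fin k × Bool)} {d : Fin k × Bool} (h : Rel F l m) :
    FM F d l ↔ FM F d m := by
  induction h with
  | refl => exact Iff.rfl
  | tail _ h2 ih => exact ih.trans ⟨h2.fm, (Step.symm h2).fm⟩

/-! ### reverse and inverse -/

lemma Step.reverse {l m : List (Fin k × Bool)} (h : Step F l m) :
    Step F l.reverse m.reverse := by
  obtain ⟨A, B, x, y, hc, rfl, rfl⟩ := h
  refine ⟨B.reverse, A.reverse, y, x, comm_symm hc, ?_, ?_⟩ <;> simp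

lemma Rel.reverse {l m : List (Fin k × Bool)} (h : Rel F l m) :
    Rel F l.reverse m.reverse :=
  Relation.ReflTransGen.lift _ (fun _ _ h => Step.reverse h) _ _ h

lemma Step.map_linv {l m : List (Fin k × Bool)} (h : Step F l m) :
    Step F (l.map linv) (m.map linv) := by
  obtain ⟨A, B, x, y, hc, rfl, rfl⟩ := h
  exact ⟨A.map linv, B.map linv, linv x, linv y, hc, by simp, by simp⟩

lemma Rel.map_linv {l m : List (Fin k × Bool)} (h : Rel F l m) :
    Rel F (l.map linv) (m.map linv) :=
  Relation.ReflTransGen.lift _ (fun _ _ h => Step.map_linv h) _ _ h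

/-- formal inverse of a word -/
def invRev (l : List (Fin k × Bool)) : List (Fin k × Bool) := (l.map linv).reverse

@[simp] lemma invRev_nil : invRev ([] : List (Fin k × Bool)) = [] := rfl

lemma invRev_append (l m : List (Fin k × Bool)) :
    invRev (l ++ m) = invRev m ++ invRev l := by simp [invRev]

lemma invRev_snoc (l : List (Fin k × Bool)) (c : Fin k × Bool) :
    invRev (l ++ [c]) = linv c :: invRev l := by simp [invRev]

@[simp] lemma invRev_invRev (l : List (Fin k × Bool)) : invRev (invRev l) = l := by
  simp only [invRev, List.map_reverse, List.reverse_reverse, List.map_map]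
  rw [show linv ∘ linv = id from funext linv_linv, List.map_id]

lemma Rel.invRev {l m : List (Fin k × Bool)} (h : Rel F l m) :
    Rel F (invRev l) (invRev m) := (h.map_linv).reverse

lemma wordProd_invRev (l : List (Fin k × Bool)) :
    wordProd k F (invRev l) = (wordProd k F l)⁻¹ := by
  induction l with
  | nil => simp
  | cons c t ih =>
    have : invRev (c :: t) = invRev t ++ [linv c] := by simp [invRev]
    rw [this, wordProd_append, ih]
    simp [mul_inv_rev]

/-! ### end-maximal letters -/

/-- `EM F d t` : `d` occurs in `t` and can be moved to the end. -/
def EM (F : Set (Sym2 (Fin k))) (d : Fin k × Bool) (t : List (Fin k × Bool)) : Prop :=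
  FM F d t.reverse

/-- remove the last occurrence of `d` -/
def emErase (d : Fin k × Bool) (t : List (Fin k × Bool)) : List (Fin k × Bool) :=
  (fmErase d t.reverse).reverse

@[simp] lemma EM_nil (d : Fin k × Bool) : ¬ EM F d [] := fun h => h

lemma EM_snoc {d c : Fin k × Bool} {l : List (Fin k × Bool)} :
    EM F d (l ++ [c]) ↔ c = d ∨ (comm F d c ∧ EM F d l) := by
  unfold EM
  rw [List.reverse_append]
  exact FM_cons

lemma EM_cons {d c : Fin k × Bool} {t : List (Fin k × Bool)} :
    EM F d (c :: t) ↔ EM F d t ∨ ((∀ b ∈ t, comm F d b) ∧ c = d) := by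
  unfold EM
  rw [show (c :: t).reverse = t.reverse ++ [c] by simp, FM_append]
  simp only [FM_cons, FM_nil, or_false, and_false, false_or, List.mem_reverse]

lemma EM_rel {l m : List (Fin k × Bool)} {d : Fin k × Bool} (h : Rel F l m) :
    EM F d l ↔ EM F d m := h.reverse.fm

lemma em_rel_snoc {d : Fin k × Bool} {t : List (Fin k × Bool)} (h : EM F d t) :
    Rel F t (emErase d t ++ [d]) := by
  have h1 : Rel F t.reverse (d :: fmErase d t.reverse) := fm_rel_front h
  have h2 := h1.reverse
  simpa [emErase] using h2

lemma fmErase_cons_self (d : Fin k × Bool) (t : List (Fin k × Bool)) :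
    fmErase d (d :: t) = t := by simp [fmErase]

lemma fmErase_cons_ne {c d : Fin k × Bool} (h : ¬ c = d) (t : List (Fin k × Bool)) :
    fmErase d (c :: t) = c :: fmErase d t := by simp [fmErase, h]

lemma emErase_snoc_self (d : Fin k × Bool) (l : List (Fin k × Bool)) :
    emErase d (l ++ [d]) = l := by
  simp [emErase, fmErase_cons_self]

lemma emErase_snoc_ne {c d : Fin k × Bool} (h : ¬ c = d) (l : List (Fin k × Bool)) :
    emErase d (l ++ [c]) = emErase d l ++ [c] := by
  simp [emErase, fmErase_cons_ne h]

lemma fmErase_comm {d e : Fin k × Bool} (h : d ≠ e) : ∀ (l : List (Fin k × Bool)),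
    fmErase d (fmErase e l) = fmErase e (fmErase d l) := by
  intro l
  induction l with
  | nil => rfl
  | cons c t ih =>
    by_cases hcd : c = d
    · subst hcd
      rw [fmErase_cons_ne (show ¬ c = e from h) t, fmErase_cons_self, fmErase_cons_self]
    · by_cases hce : c = e
      · subst hce
        rw [fmErase_cons_self, fmErase_cons_ne hcd, fmErase_cons_self]
      · rw [fmErase_cons_ne hce, fmErase_cons_ne hcd, fmErase_cons_ne hcd,
          fmErase_cons_ne hce, ih]

lemma emErase_comm {d e : Fin k × Bool} (h : d ≠ e) (l : List (Fin k × Bool)) :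
    emErase d (emErase e l) = emErase e (emErase d l) := by
  simp [emErase, fmErase_comm h]

/-! ### reduced words -/

/-- `NRed F l` : the word `l` is not reduced. -/
def NRed (F : Set (Sym2 (Fin k))) : List (Fin k × Bool) → Prop
  | [] => False
  | c :: t => FM F (linv c) t ∨ NRed F t

/-- `l` is a reduced word. -/
def Red (F : Set (Sym2 (Fin k))) (l : List (Fin k × Bool)) : Prop := ¬ NRed F l

@[simp] lemma NRed_nil : ¬ NRed F [] := fun h => h

lemma NRed_cons {c : Fin k × Bool} {t : List (Fin k × Bool)} :
    NRed F (c :: t) ↔ FM F (linv c) t ∨ NRed F t := Iff.rfl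

@[simp] lemma Red_nil : Red F [] := fun h => h

lemma Red.tail {c : Fin k × Bool} {t : List (Fin k × Bool)} (h : Red F (c :: t)) : Red F t :=
  fun hn => h (Or.inr hn)

lemma NRed_append_right {t : List (Fin k × Bool)} (s : List (Fin k × Bool)) (h : NRed F t) :
    NRed F (s ++ t) := by
  induction s with
  | nil => exact h
  | cons c s ih => exact Or.inr ih

lemma NRed_append_left {s : List (Fin k × Bool)} (t : List (Fin k × Bool)) (h : NRed F s) :
    NRed F (s ++ t) := by
  induction s with
  | nil => cases h
  | cons c s ih =>
    rcases h with h | h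
    · exact Or.inl (FM_append.2 (Or.inl h))
    · exact Or.inr (ih h)

lemma Red.of_append {s t : List (Fin k × Bool)} (h : Red F (s ++ t)) : Red F s ∧ Red F t :=
  ⟨fun hn => h (NRed_append_left t hn), fun hn => h (NRed_append_right s hn)⟩

lemma NRed_adjacent (A : List (Fin k × Bool)) (a : Fin k × Bool) (C : List (Fin k × Bool)) :
    NRed F (A ++ a :: linv a :: C) :=
  NRed_append_right A (Or.inl (Or.inl rfl))

lemma NRed_swap_mp {x y : Fin k × Bool} {B : List (Fin k × Bool)} (hc : comm F x y)
    (h : NRed F (x :: y :: B)) : NRed F (y :: x :: B) := by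
  rcases h with h | h
  · rcases h with h | ⟨h1, h2⟩
    · exact absurd h (comm_ne_linv hc)
    · exact Or.inr (Or.inl h2)
  · rcases h with h | h
    · exact Or.inl (Or.inr ⟨comm_symm hc, h⟩)
    · exact Or.inr (Or.inr h)

lemma NRed_swap_append {x y : Fin k × Bool} {B : List (Fin k × Bool)} (hc : comm F x y) :
    ∀ A, NRed F (A ++ x :: y :: B) → NRed F (A ++ y :: x :: B)
  | [], hf => NRed_swap_mp hc hf
  | c :: A', hf => by
    rcases hf with h | h
    · exact Or.inl (FM_swap_append hc A' h)
    · exact Or.inr (NRed_swap_append hc A' h)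

lemma Step.nred {l m : List (Fin k × Bool)} (h : Step F l m) (hn : NRed F l) : NRed F m := by
  obtain ⟨A, B, x, y, hc, rfl, rfl⟩ := h
  exact NRed_swap_append hc A hn

lemma Rel.nred_iff {l m : List (Fin k × Bool)} (h : Rel F l m) : NRed F l ↔ NRed F m := by
  induction h with
  | refl => exact Iff.rfl
  | tail _ h2 ih => exact ih.trans ⟨h2.nred, (Step.symm h2).nred⟩

lemma Rel.red_iff {l m : List (Fin k × Bool)} (h : Rel F l m) : Red F l ↔ Red F m :=
  not_congr h.nred_iff

lemma NRed_snoc {l : List (Fin k × Bool)} {c : Fin k × Bool} :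
    NRed F (l ++ [c]) ↔ NRed F l ∨ EM F (linv c) l := by
  induction l with
  | nil =>
    simp only [List.nil_append, NRed_cons, FM_nil, NRed_nil, or_self]
    simp
  | cons d t ih =>
    rw [List.cons_append, NRed_cons, ih, NRed_cons, EM_cons, FM_append]
    simp only [FM_cons, FM_nil, or_false, and_false, false_or]
    constructor
    · rintro ((h | ⟨h1, h2⟩) | (h | h))
      · exact Or.inl (Or.inl h)
      · -- c = linv d hence d = linv c
        subst h2
        refine Or.inr (Or.inr ⟨?_, by simp⟩)
        intro b hb
        have := h1 b hb
        simpa using this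
      · exact Or.inl (Or.inr h)
      · exact Or.inr (Or.inl h)
    · rintro ((h | h) | (h | ⟨h1, h2⟩))
      · exact Or.inl (Or.inl h)
      · exact Or.inr (Or.inl h)
      · exact Or.inr (Or.inr h)
      · subst h2
        refine Or.inl (Or.inr ⟨?_, by simp⟩)
        intro b hb
        have := h1 b hb
        simpa using this
/-! ### invariance of reducedness under reverse and inverse -/

lemma FM_map_linv {d : Fin k × Bool} : ∀ {l : List (Fin k × Bool)},
    FM F (linv d) (l.map linv) ↔ FM F d l := by
  intro l
  induction l with
  | nil => simp
  | cons c t ih =>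
    simp only [List.map_cons, FM_cons]
    constructor
    · rintro (h | ⟨h1, h2⟩)
      · exact Or.inl (linv_inj h)
      · exact Or.inr ⟨h1, ih.1 h2⟩
    · rintro (h | ⟨h1, h2⟩)
      · exact Or.inl (by rw [h])
      · exact Or.inr ⟨h1, ih.2 h2⟩

lemma NRed_map_linv : ∀ {l : List (Fin k × Bool)}, NRed F (l.map linv) ↔ NRed F l := by
  intro l
  induction l with
  | nil => simp [NRed]
  | cons c t ih =>
    simp only [List.map_cons, NRed_cons]
    constructor
    · rintro (h | h)
      · exact Or.inl (FM_map_linv.1 h)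
      · exact Or.inr (ih.1 h)
    · rintro (h | h)
      · exact Or.inl (FM_map_linv.2 h)
      · exact Or.inr (ih.2 h)

lemma NRed_reverse : ∀ {l : List (Fin k × Bool)}, NRed F l.reverse ↔ NRed F l := by
  intro l
  induction l with
  | nil => exact Iff.rfl
  | cons c t ih =>
    rw [show (c :: t).reverse = t.reverse ++ [c] by simp, NRed_snoc, NRed_cons]
    unfold EM
    rw [List.reverse_reverse]
    rw [ih]
    exact Or.comm

lemma Red.reverse {l : List (Fin k × Bool)} (h : Red F l) : Red F l.reverse :=
  fun hn => h (NRed_reverse.1 hn)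

lemma Red.invRev {l : List (Fin k × Bool)} (h : Red F l) : Red F (invRev l) := by
  intro hn
  unfold GraphGroupPaper.invRev at hn
  rw [NRed_reverse, NRed_map_linv] at hn
  exact h hn

/-! ### the action on reduced words -/

open Classical in
/-- multiply a reduced word on the right by the letter `β` -/
noncomputable def actW (F : Set (Sym2 (Fin k))) (β : Fin k × Bool) (l : List (Fin k × Bool)) :
    List (Fin k × Bool) :=
  if EM F (linv β) l then emErase (linv β) l else l ++ [β]

lemma actW_of_em {β : Fin k × Bool} {l : List (Fin k × Bool)} (h : EM F (linv β) l) :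
    actW F β l = emErase (linv β) l := if_pos h

lemma actW_of_not_em {β : Fin k × Bool} {l : List (Fin k × Bool)} (h : ¬ EM F (linv β) l) :
    actW F β l = l ++ [β] := if_neg h

lemma actW_red {β : Fin k × Bool} {l : List (Fin k × Bool)} (h : Red F l) :
    Red F (actW F β l) := by
  by_cases he : EM F (linv β) l
  · rw [actW_of_em he]
    have h1 : Rel F l (emErase (linv β) l ++ [linv β]) := em_rel_snoc he
    have h2 : Red F (emErase (linv β) l ++ [linv β]) := (h1.red_iff).1 h
    exact h2.of_append.1
  · rw [actW_of_not_em he]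
    intro hn
    rcases NRed_snoc.1 hn with hn | hn
    · exact h hn
    · exact he hn

lemma actW_rel {β : Fin k × Bool} {l m : List (Fin k × Bool)} (h : Rel F l m) :
    Rel F (actW F β l) (actW F β m) := by
  by_cases he : EM F (linv β) l
  · have he' : EM F (linv β) m := (EM_rel h).1 he
    rw [actW_of_em he, actW_of_em he']
    apply rel_snoc_cancel (c := linv β)
    exact ((em_rel_snoc he).symm.trans h).trans (em_rel_snoc he')
  · have he' : ¬ EM F (linv β) m := fun hm => he ((EM_rel h).2 hm)
    rw [actW_of_not_em he, actW_of_not_em he']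
    exact h.append_right [β]

lemma actW_wordProd {β : Fin k × Bool} {l : List (Fin k × Bool)} :
    wordProd k F (actW F β l) = wordProd k F l * sym k F β := by
  by_cases he : EM F (linv β) l
  · rw [actW_of_em he]
    have h1 : wordProd k F l = wordProd k F (emErase (linv β) l ++ [linv β]) :=
      (em_rel_snoc he).wordProd_eq
    rw [h1, wordProd_append, wordProd_singleton, sym_linv]
    group
  · rw [actW_of_not_em he, wordProd_append, wordProd_singleton]

lemma actW_linv_actW {β : Fin k × Bool} {l : List (Fin k × Bool)} (h : Red F l) :
    Rel F (actW F (linv β) (actW F β l)) l := by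
  by_cases he : EM F (linv β) l
  · rw [actW_of_em he]
    have hne : ¬ EM F (linv (linv β)) (emErase (linv β) l) := by
      rw [linv_linv]
      intro hb
      have h1 : Rel F l (emErase (linv β) l ++ [linv β]) := em_rel_snoc he
      have h2 : Rel F (emErase (linv β) l)
          (emErase β (emErase (linv β) l) ++ [β]) := em_rel_snoc hb
      have h3 : Rel F l (emErase β (emErase (linv β) l) ++ [β] ++ [linv β]) :=
        h1.trans (h2.append_right [linv β])
      have h4 : NRed F (emErase β (emErase (linv β) l) ++ [β] ++ [linv β]) := by
        have := NRed_adjacent (F := F) (emErase β (emErase (linv β) l)) β []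
        simpa using this
      exact h (h3.nred_iff.2 h4)
    rw [actW_of_not_em hne]
    exact (em_rel_snoc he).symm
  · rw [actW_of_not_em he]
    have hem : EM F (linv (linv β)) (l ++ [β]) := by
      rw [linv_linv]
      exact EM_snoc.2 (Or.inl rfl)
    rw [actW_of_em hem, linv_linv, emErase_snoc_self]
    exact Rel.refl l

/-- appending a commuting letter does not change end-maximality -/
lemma EM_snoc_comm {d γ : Fin k × Bool} {l : List (Fin k × Bool)} (hc : comm F d γ) :
    EM F d (l ++ [γ]) ↔ EM F d l := by
  rw [EM_snoc]
  constructor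
  · rintro (h | ⟨_, h⟩)
    · exact absurd h (fun e => (comm_ne hc) e.symm)
    · exact h
  · intro h; exact Or.inr ⟨hc, h⟩

lemma EM_emErase_comm {d e : Fin k × Bool} {l : List (Fin k × Bool)} (hc : comm F e d)
    (hd : EM F d l) : EM F e (emErase d l) ↔ EM F e l := by
  have h1 : Rel F l (emErase d l ++ [d]) := em_rel_snoc hd
  rw [EM_rel h1, EM_snoc_comm hc]

lemma EM_actW {d β : Fin k × Bool} {l : List (Fin k × Bool)} (hc : comm F d β) :
    EM F d (actW F β l) ↔ EM F d l := by
  by_cases he : EM F (linv β) l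
  · rw [actW_of_em he]
    exact EM_emErase_comm (by simpa using hc) he
  · rw [actW_of_not_em he]
    exact EM_snoc_comm hc

lemma actW_comm_mixed {β γ : Fin k × Bool} {l : List (Fin k × Bool)} (hc : comm F β γ)
    (hβ : EM F (linv β) l) (hγ : ¬ EM F (linv γ) l) :
    actW F β (actW F γ l) = actW F γ (actW F β l) := by
  have hcc : comm F (linv β) γ := by simpa using hc
  have hcc2 : comm F (linv γ) (linv β) := by
    simpa using comm_symm hc
  -- left side
  rw [actW_of_not_em hγ]
  have h1 : EM F (linv β) (l ++ [γ]) := (EM_snoc_comm hcc).2 hβ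
  rw [actW_of_em h1]
  rw [emErase_snoc_ne (fun e => (comm_ne hcc) e.symm)]
  -- right side
  rw [actW_of_em hβ]
  have h2 : ¬ EM F (linv γ) (emErase (linv β) l) := by
    rw [EM_emErase_comm hcc2 hβ]
    exact hγ
  rw [actW_of_not_em h2]

lemma actW_comm {β γ : Fin k × Bool} {l : List (Fin k × Bool)} (hc : comm F β γ) :
    Rel F (actW F β (actW F γ l)) (actW F γ (actW F β l)) := by
  have hβγ : comm F (linv β) (linv γ) := by simpa using hc
  by_cases hβ : EM F (linv β) l <;> by_cases hγ : EM F (linv γ) l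
  · -- both cancel
    rw [actW_of_em hβ, actW_of_em hγ]
    have h1 : EM F (linv β) (emErase (linv γ) l) :=
      (EM_emErase_comm hβγ hγ).2 hβ
    have h2 : EM F (linv γ) (emErase (linv β) l) :=
      (EM_emErase_comm (comm_symm hβγ) hβ).2 hγ
    rw [actW_of_em h1, actW_of_em h2, emErase_comm (comm_ne hβγ) l]
    exact Rel.refl _
  · rw [actW_comm_mixed hc hβ hγ]
    exact Rel.refl _
  · rw [actW_comm_mixed (comm_symm hc) hγ hβ]
    exact Rel.refl _
  · -- both append
    rw [actW_of_not_em hγ]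
    have h1 : ¬ EM F (linv β) (l ++ [γ]) := by
      rw [EM_snoc_comm (by simpa using hc)]
      exact hβ
    rw [actW_of_not_em h1, actW_of_not_em hβ]
    have h2 : ¬ EM F (linv γ) (l ++ [β]) := by
      rw [EM_snoc_comm (by simpa using comm_symm hc)]
      exact hγ
    rw [actW_of_not_em h2]
    exact Rel.of_step ⟨l, [], γ, β, comm_symm hc, by simp, by simp⟩

/-! ### the quotient of reduced words -/

def RW (k : ℕ) (F : Set (Sym2 (Fin k))) := {l : List (Fin k × Bool) // Red F l}

instance rwSetoid (k : ℕ) (F : Set (Sym2 (Fin k))) : Setoid (RW k F) :=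
  ⟨fun a b => Rel F a.1 b.1, fun _ => Rel.refl _, Rel.symm, Rel.trans⟩

def T (k : ℕ) (F : Set (Sym2 (Fin k))) := Quotient (rwSetoid k F)

noncomputable def actT (β : Fin k × Bool) : T k F → T k F :=
  Quotient.map (fun l => ⟨actW F β l.1, actW_red l.2⟩) (fun _ _ h => actW_rel h)

lemma actT_mk (β : Fin k × Bool) (l : RW k F) :
    actT β (⟦l⟧ : T k F) = ⟦(⟨actW F β l.1, actW_red l.2⟩ : RW k F)⟧ := rfl

lemma actT_linv_actT (β : Fin k × Bool) (t : T k F) : actT (linv β) (actT β t) = t := by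
  induction t using Quotient.ind with
  | _ l =>
    exact Quotient.sound (actW_linv_actW l.2)

noncomputable def actE (β : Fin k × Bool) : Equiv.Perm (T k F) :=
  ⟨actT β, actT (linv β), fun t => actT_linv_actT β t,
    fun t => by
      have := actT_linv_actT (linv β) t
      rwa [linv_linv] at this⟩

lemma actE_apply (β : Fin k × Bool) (t : T k F) : actE β t = actT β t := rfl

lemma actE_comm {β γ : Fin k × Bool} (hc : comm F β γ) :
    actE (F := F) β * actE γ = actE γ * actE β := by
  apply Equiv.ext
  intro t
  induction t using Quotient.ind with
  | _ l =>
    exact Quotient.sound (actW_comm hc)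

noncomputable def phi : Grp k F →* Equiv.Perm (T k F) :=
  PresentedGroup.toGroup (f := fun i => actE (i, true))
    (by
      rintro r ⟨i, j, hij, hF, rfl⟩
      have hc : comm F (i, true) (j, true) := ⟨hij, hF⟩
      have := actE_comm (F := F) hc
      simp only [map_mul, map_inv, FreeGroup.lift_apply_of]
      rw [mul_assoc, mul_assoc, ← mul_inv_rev, ← this, mul_inv_rev]
      group)

lemma phi_gen (i : Fin k) : phi (F := F) (gen k F i) = actE (i, true) :=
  PresentedGroup.toGroup.of _

lemma phi_sym_apply (β : Fin k × Bool) (t : T k F) : phi (sym k F β) t = actT β t := by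
  obtain ⟨i, b⟩ := β
  cases b
  · have : sym k F (i, false) = (gen k F i)⁻¹ := rfl
    rw [this, map_inv, phi_gen]
    show ((actE (i, true))⁻¹ : Equiv.Perm (T k F)) t = _
    rfl
  · have : sym k F (i, true) = gen k F i := rfl
    rw [this, phi_gen]
    rfl

/-- the class of the empty word -/
def epsT : T k F := ⟦(⟨[], Red_nil⟩ : RW k F)⟧

lemma phi_wordProd_eps {r : List (Fin k × Bool)} (h : Red F r) :
    phi (wordProd k F r) epsT = (⟦(⟨r.reverse, h.reverse⟩ : RW k F)⟧ : T k F) := by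
  induction r with
  | nil =>
    simp only [wordProd_nil, map_one]
    rfl
  | cons β r' ih =>
    have hr' : Red F r' := h.tail
    rw [wordProd_cons, map_mul]
    show phi (sym k F β) (phi (wordProd k F r') epsT) = _
    rw [ih hr']
    refine (phi_sym_apply β _).trans ?_
    apply Quotient.sound
    show Rel F (actW F β r'.reverse) (β :: r').reverse
    have hnem : ¬ EM F (linv β) r'.reverse := by
      intro hem
      apply h
      left
      unfold EM at hem
      rwa [List.reverse_reverse] at hem
    rw [actW_of_not_em hnem]
    simp only [List.reverse_cons]
    exact Rel.refl _

/-- Uniqueness of reduced words up to shuffles -/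
lemma red_unique {r₁ r₂ : List (Fin k × Bool)} (h₁ : Red F r₁) (h₂ : Red F r₂)
    (h : wordProd k F r₁ = wordProd k F r₂) : Rel F r₁ r₂ := by
  have e1 := phi_wordProd_eps h₁
  have e2 := phi_wordProd_eps h₂
  rw [h, e2] at e1
  have h3 : Rel F r₂.reverse r₁.reverse := Quotient.exact e1
  have h4 := h3.reverse
  simpa using h4.symm

/-! ### normalization and length -/

lemma nred_shorter : ∀ {l : List (Fin k × Bool)}, NRed F l →
    ∃ l', wordProd k F l' = wordProd k F l ∧ l'.length + 2 = l.length := by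
  intro l
  induction l with
  | nil => intro h; cases h
  | cons c t ih =>
    intro h
    rcases h with h | h
    · refine ⟨fmErase (linv c) t, ?_, ?_⟩
      · have h1 : wordProd k F t = wordProd k F (linv c :: fmErase (linv c) t) :=
          (fm_rel_front h).wordProd_eq
        rw [wordProd_cons, h1, wordProd_cons, sym_linv]
        rw [← mul_assoc, mul_inv_cancel, one_mul]
      · have := (fm_rel_front h).length
        simp only [List.length_cons] at this ⊢
        omega
    · obtain ⟨t', h1, h2⟩ := ih h
      refine ⟨c :: t', ?_, ?_⟩
      · rw [wordProd_cons, wordProd_cons, h1]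
      · simp only [List.length_cons]; omega

lemma normalize_aux : ∀ (n : ℕ) (l : List (Fin k × Bool)), l.length ≤ n →
    ∃ r, Red F r ∧ wordProd k F r = wordProd k F l ∧ r.length ≤ l.length := by
  intro n
  induction n with
  | zero =>
    intro l hl
    have : l = [] := List.length_eq_zero_iff.1 (Nat.le_zero.1 hl)
    subst this
    exact ⟨[], Red_nil, rfl, le_refl _⟩
  | succ n ih =>
    intro l hl
    by_cases h : Red F l
    · exact ⟨l, h, rfl, le_refl _⟩
    · have hn : NRed F l := not_not.1 h
      obtain ⟨l', h1, h2⟩ := nred_shorter hn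
      obtain ⟨r, hr1, hr2, hr3⟩ := ih l' (by omega)
      exact ⟨r, hr1, by rw [hr2, h1], by omega⟩

lemma normalize (l : List (Fin k × Bool)) :
    ∃ r, Red F r ∧ wordProd k F r = wordProd k F l ∧ r.length ≤ l.length :=
  normalize_aux l.length l (le_refl _)

lemma len_le {l : List (Fin k × Bool)} {x : Grp k F} (h : wordProd k F l = x) :
    len x ≤ l.length :=
  Nat.sInf_le ⟨l, h, rfl⟩

lemma exists_word (x : Grp k F) : ∃ l, wordProd k F l = x := by
  induction x using PresentedGroup.induction_on with
  | _ z =>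
    induction z using FreeGroup.induction_on with
    | C1 => exact ⟨[], by simp⟩
    | of i => exact ⟨[(i, true)], by simp [sym, gen, PresentedGroup.of]⟩
    | inv_of i hi =>
      obtain ⟨l, hl⟩ := hi
      exact ⟨invRev l, by rw [wordProd_invRev, hl, ← map_inv]⟩
    | mul a b ha hb =>
      obtain ⟨la, hla⟩ := ha
      obtain ⟨lb, hlb⟩ := hb
      exact ⟨la ++ lb, by rw [wordProd_append, hla, hlb, ← map_mul]⟩

lemma exists_red_word (x : Grp k F) : ∃ r, Red F r ∧ wordProd k F r = x := by
  obtain ⟨l, hl⟩ := exists_word x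
  obtain ⟨r, h1, h2, _⟩ := normalize l
  exact ⟨r, h1, by rw [h2, hl]⟩

lemma len_red {r : List (Fin k × Bool)} (h : Red F r) :
    len (wordProd k F r) = r.length := by
  apply le_antisymm (len_le rfl)
  have hne : {n | ∃ l, wordProd k F l = wordProd k F r ∧ l.length = n}.Nonempty :=
    ⟨r.length, r, rfl, rfl⟩
  have hmem := Nat.sInf_mem hne
  obtain ⟨l, hl, hlen⟩ := hmem
  obtain ⟨r', h1, h2, h3⟩ := normalize l
  have h4 : Rel F r' r := red_unique h1 h (by rw [h2, hl])
  calc r.length = r'.length := h4.length.symm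
  _ ≤ l.length := h3
  _ = len (wordProd k F r) := hlen

lemma min_red {l : List (Fin k × Bool)} {x : Grp k F} (h1 : wordProd k F l = x)
    (h2 : l.length = len x) : Red F l := by
  by_contra h
  have hn : NRed F l := not_not.1 h
  obtain ⟨l', hl1, hl2⟩ := nred_shorter hn
  have : len x ≤ l'.length := len_le (by rw [hl1, h1])
  omega

lemma len_one : len (1 : Grp k F) = 0 := by
  have := len_red (F := F) Red_nil
  simpa using this

lemma eq_one_of_len_zero {x : Grp k F} (h : len x = 0) : x = 1 := by
  obtain ⟨r, h1, h2⟩ := exists_red_word x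
  have h3 : r.length = 0 := by rw [← h, ← h2, len_red h1]
  have : r = [] := List.length_eq_zero_iff.1 h3
  rw [← h2, this, wordProd_nil]

lemma len_mul_le (x y : Grp k F) : len (x * y) ≤ len x + len y := by
  obtain ⟨r, hr1, hr2⟩ := exists_red_word x
  obtain ⟨s, hs1, hs2⟩ := exists_red_word y
  have : wordProd k F (r ++ s) = x * y := by rw [wordProd_append, hr2, hs2]
  calc len (x * y) ≤ (r ++ s).length := len_le this
  _ = r.length + s.length := List.length_append
  _ = len x + len y := by rw [← hr2, ← hs2, len_red hr1, len_red hs1]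

lemma len_inv_le (x : Grp k F) : len x⁻¹ ≤ len x := by
  obtain ⟨r, hr1, hr2⟩ := exists_red_word x
  have : wordProd k F (invRev r) = x⁻¹ := by rw [wordProd_invRev, hr2]
  calc len x⁻¹ ≤ (invRev r).length := len_le this
  _ = r.length := by simp [invRev]
  _ = len x := by rw [← hr2, len_red hr1]

lemma len_inv (x : Grp k F) : len x⁻¹ = len x := by
  refine le_antisymm (len_inv_le x) ?_
  have := len_inv_le x⁻¹
  rwa [inv_inv] at this

lemma red_singleton (β : Fin k × Bool) : Red F [β] := by
  intro h
  rcases h with h | h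
  · exact FM_nil _ h
  · exact NRed_nil h

lemma len_sym (β : Fin k × Bool) : len (sym k F β) = 1 := by
  have := len_red (red_singleton (F := F) β)
  simpa using this

lemma count_eq_cnt (a : Fin k × Bool) : ∀ (l : List (Fin k × Bool)), l.count a = cnt a l := by
  intro l
  induction l with
  | nil => rfl
  | cons c t ih =>
    rw [List.count_cons, cnt_cons, ih]
    by_cases h : c = a
    · simp [h]
    · simp [h]

lemma exists_minword (x : Grp k F) : ∃ l, MinWord x l := by
  obtain ⟨r, h1, h2⟩ := exists_red_word x
  exact ⟨r, h2, by rw [← h2, len_red h1]⟩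

lemma occurs_iff {x : Grp k F} {r : List (Fin k × Bool)} (hr : Red F r)
    (hx : wordProd k F r = x) (α : Fin k × Bool) : Occurs α x ↔ 0 < cnt α r := by
  unfold Occurs symCount
  rw [dif_pos (exists_minword x)]
  have hc := (exists_minword x).choose_spec
  have hcr : Red F (exists_minword x).choose := min_red hc.1 hc.2
  have hrel : Rel F (exists_minword x).choose r := red_unique hcr hr (by rw [hc.1, hx])
  rw [count_eq_cnt, hrel.cnt_eq]

lemma maxSym_iff_em {p : Grp k F} {P : List (Fin k × Bool)} (hP : Red F P)
    (hPp : wordProd k F P = p) (β : Fin k × Bool) : MaxSym β p ↔ EM F β P := by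
  have hkey : (p * (sym k F β)⁻¹)⁻¹ * p = sym k F β := by group
  unfold MaxSym le
  rw [hkey, len_sym]
  constructor
  · intro h
    obtain ⟨Q, hQ1, hQ2⟩ := exists_red_word (p * (sym k F β)⁻¹)
    have hprod : wordProd k F (Q ++ [β]) = p := by
      rw [wordProd_append, hQ2, wordProd_singleton]
      group
    have hlen : (Q ++ [β]).length = len p := by
      simp only [List.length_append, List.length_singleton]
      rw [← hQ2, len_red hQ1] at h
      omega
    have hred : Red F (Q ++ [β]) := min_red hprod hlen
    have hrel : Rel F (Q ++ [β]) P := red_unique hred hP (by rw [hprod, hPp])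
    exact (EM_rel hrel).1 (EM_snoc.2 (Or.inl rfl))
  · intro h
    have hrel : Rel F P (emErase β P ++ [β]) := em_rel_snoc h
    have hredE : Red F (emErase β P) := ((hrel.red_iff).1 hP).of_append.1
    have hprodE : wordProd k F (emErase β P) = p * (sym k F β)⁻¹ := by
      have := hrel.wordProd_eq
      rw [wordProd_append, wordProd_singleton] at this
      rw [hPp] at this
      rw [this]
      group
    have hlenP : len p = P.length := by rw [← hPp, len_red hP]
    have hlenE : len (p * (sym k F β)⁻¹) = (emErase β P).length := by
      rw [← hprodE, len_red hredE]
    have hl := hrel.length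
    simp only [List.length_append, List.length_singleton] at hl
    omega

/-! ### the product-cancellation lemma -/

lemma move_front_back {a : Fin k × Bool} : ∀ {t : List (Fin k × Bool)},
    (∀ b ∈ t, comm F a b) → Rel F (a :: t) (t ++ [a]) := by
  intro t
  induction t with
  | nil => intro _; exact Rel.refl _
  | cons c t ih =>
    intro h
    have h1 : Step F (a :: c :: t) (c :: a :: t) :=
      ⟨[], t, a, c, h c (List.mem_cons_self), rfl, rfl⟩
    refine (Rel.of_step h1).trans ?_
    exact Rel.cons c (ih fun b hb => h b (List.mem_cons_of_mem c hb))

lemma extract {V : List (Fin k × Bool)} (hV : Red F V) :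
    ∀ {U : List (Fin k × Bool)}, Red F U → NRed F (U ++ V) →
    ∃ c U' V', Rel F U (U' ++ [c]) ∧ Rel F V (linv c :: V') := by
  intro U
  induction U with
  | nil =>
    intro _ h
    rw [List.nil_append] at h
    exact absurd h hV
  | cons a t ih =>
    intro hU h
    rw [List.cons_append, NRed_cons] at h
    rcases h with h | h
    · rcases FM_append.1 h with h | ⟨hall, hfm⟩
      · exact absurd (Or.inl h) hU
      · refine ⟨a, t, fmErase (linv a) V, ?_, fm_rel_front hfm⟩
        exact move_front_back (fun b hb => hall b hb)
    · obtain ⟨c, U', V', h1, h2⟩ := ih hU.tail h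
      exact ⟨c, a :: U', V', Rel.cons a h1, h2⟩

lemma prod_cancel_aux : ∀ (n : ℕ) (U V : List (Fin k × Bool)), U.length ≤ n →
    Red F U → Red F V →
    ∃ A S B, Rel F U (A ++ S) ∧ Rel F V (invRev S ++ B) ∧ Red F (A ++ B) := by
  intro n
  induction n with
  | zero =>
    intro U V hl hU hV
    have : U = [] := List.length_eq_zero_iff.1 (Nat.le_zero.1 hl)
    subst this
    exact ⟨[], [], V, by simpa using Rel.refl ([] : List (Fin k × Bool)),
      by simpa using Rel.refl V, hV⟩
  | succ n ih =>
    intro U V hl hU hV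
    by_cases h : NRed F (U ++ V)
    · obtain ⟨c, U', V', h1, h2⟩ := extract hV hU h
      have hU' : Red F U' := ((h1.red_iff).1 hU).of_append.1
      have hV' : Red F V' := ((h2.red_iff).1 hV).tail
      have hUlen : U.length = U'.length + 1 := by
        have := h1.length; simpa using this
      obtain ⟨A, S₀, B, hA, hB, hAB⟩ := ih U' V' (by omega) hU' hV'
      refine ⟨A, S₀ ++ [c], B, ?_, ?_, hAB⟩
      · refine h1.trans ?_
        have := hA.append_right [c]
        rwa [List.append_assoc] at this
      · refine h2.trans ?_
        rw [invRev_snoc]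
        exact Rel.cons (linv c) hB
    · exact ⟨U, [], V, by simpa using Rel.refl U, by simpa using Rel.refl V, h⟩

lemma prod_cancel {U V : List (Fin k × Bool)} (hU : Red F U) (hV : Red F V) :
    ∃ A S B, Rel F U (A ++ S) ∧ Rel F V (invRev S ++ B) ∧ Red F (A ++ B) :=
  prod_cancel_aux U.length U V (le_refl _) hU hV

/-! ### splitting off a final letter through an equivalence -/

lemma rel_snoc_split (γ : Fin k × Bool) (A : List (Fin k × Bool)) :
    ∀ (S l : List (Fin k × Bool)), Rel F (l ++ [γ]) (A ++ S) →
    (∃ S₀, Rel F S (S₀ ++ [γ]) ∧ Rel F l (A ++ S₀)) ∨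
    (∃ A₀, Rel F A (A₀ ++ [γ]) ∧ Rel F l (A₀ ++ S) ∧ ∀ c ∈ S, comm F γ c) := by
  intro S
  induction S using List.reverseRecOn with
  | nil =>
    intro l H
    rw [List.append_nil] at H
    refine Or.inr ⟨l, H.symm, by simpa using Rel.refl l, by simp⟩
  | append_singleton S₁ d ihs =>
    intro l H
    by_cases hdγ : d = γ
    · subst hdγ
      refine Or.inl ⟨S₁, Rel.refl _, ?_⟩
      apply rel_snoc_cancel (c := d)
      rwa [← List.append_assoc] at H
    · have hEMr : EM F d (A ++ (S₁ ++ [d])) := by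
        rw [← List.append_assoc]
        exact EM_snoc.2 (Or.inl rfl)
      have hEM : EM F d (l ++ [γ]) := (EM_rel H).2 hEMr
      rcases EM_snoc.1 hEM with h | ⟨hcomm, hEMl⟩
      · exact absurd h (fun e => hdγ (by rw [← e]))
      · have hl1 : Rel F l (emErase d l ++ [d]) := em_rel_snoc hEMl
        set l₁ := emErase d l with hl₁
        have hswap : Step F (l₁ ++ [γ] ++ [d]) (l₁ ++ [d] ++ [γ]) := by
          refine ⟨l₁, [], γ, d, comm_symm hcomm, by simp, by simp⟩
        have H2 : Rel F (l₁ ++ [γ] ++ [d]) (A ++ S₁ ++ [d]) := by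
          refine (Rel.of_step hswap).trans ?_
          have step1 : Rel F (l₁ ++ [d] ++ [γ]) (l ++ [γ]) := (hl1.symm).append_right [γ]
          refine step1.trans ?_
          rwa [← List.append_assoc] at H
        have H3 : Rel F (l₁ ++ [γ]) (A ++ S₁) := rel_snoc_cancel H2
        rcases ihs l₁ H3 with ⟨S₀', r1, r2⟩ | ⟨A₀, r1, r2, r3⟩
        · refine Or.inl ⟨S₀' ++ [d], ?_, ?_⟩
          · have s1 : Rel F (S₁ ++ [d]) ((S₀' ++ [γ]) ++ [d]) := r1.append_right [d]
            refine s1.trans ?_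
            exact Rel.of_step ⟨S₀', [], γ, d, comm_symm hcomm, by simp, by simp⟩
          · have s2 : Rel F l ((A ++ S₀') ++ [d]) := hl1.trans (r2.append_right [d])
            rwa [List.append_assoc] at s2
        · refine Or.inr ⟨A₀, r1, ?_, ?_⟩
          · have s2 : Rel F l ((A₀ ++ S₁) ++ [d]) := hl1.trans (r2.append_right [d])
            rwa [List.append_assoc] at s2
          · intro c hc
            rcases List.mem_append.1 hc with hc | hc
            · exact r3 c hc
            · have : c = d := by simpa using hc
              subst this
              exact comm_symm hcomm

/-! ### the key step -/

lemma claim_step {p : Grp k F} {α γ : Fin k × Bool} {P X : List (Fin k × Bool)}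
    (hP : Red F P) (hPp : wordProd k F P = p)
    (hpeak : ∀ β, MaxSym β p → β = α) (hγα : γ ≠ α)
    (hXγ : Red F (X ++ [γ])) :
    len (wordProd k F X * p⁻¹) ≤ len (wordProd k F (X ++ [γ]) * p⁻¹) := by
  have hV : Red F (invRev P) := hP.invRev
  have hVp : wordProd k F (invRev P) = p⁻¹ := by rw [wordProd_invRev, hPp]
  obtain ⟨A, S, B, h1, h2, h3⟩ := prod_cancel hXγ hV
  have hprod : wordProd k F (A ++ B) = wordProd k F (X ++ [γ]) * p⁻¹ := by
    rw [← hVp, h1.wordProd_eq, h2.wordProd_eq, wordProd_append, wordProd_append,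
      wordProd_append, wordProd_invRev]
    group
  have hlen2 : len (wordProd k F (X ++ [γ]) * p⁻¹) = A.length + B.length := by
    rw [← hprod, len_red h3, List.length_append]
  have hPS : Rel F P (invRev B ++ S) := by
    have := h2.invRev
    rwa [invRev_invRev, invRev_append, invRev_invRev] at this
  rcases rel_snoc_split γ A S X h1 with ⟨S₀, r1, r2⟩ | ⟨A₀, r1, r2, _⟩
  · exfalso
    have hEM : EM F γ P := by
      have hrel : Rel F P (invRev B ++ (S₀ ++ [γ])) :=
        hPS.trans (Rel.append_left (invRev B) r1)
      rw [← List.append_assoc] at hrel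
      exact (EM_rel hrel).2 (EM_snoc.2 (Or.inl rfl))
    exact hγα (hpeak γ ((maxSym_iff_em hP hPp γ).2 hEM))
  · have hx : wordProd k F X * p⁻¹ = wordProd k F (A₀ ++ B) := by
      rw [← hVp, r2.wordProd_eq, h2.wordProd_eq, wordProd_append, wordProd_append,
        wordProd_append, wordProd_invRev]
      group
    have hle : len (wordProd k F X * p⁻¹) ≤ A₀.length + B.length := by
      rw [hx]
      have := len_le (l := A₀ ++ B) (x := wordProd k F (A₀ ++ B)) rfl
      simpa using this
    have hA0 : A.length = A₀.length + 1 := by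
      have := r1.length; simpa using this
    omega

/-! ### statement 15 -/

lemma stmt15_aux {α : Fin k × Bool} {y p : Grp k F} {P : List (Fin k × Bool)}
    (hP : Red F P) (hPp : wordProd k F P = p)
    (hpeak : ∀ β, MaxSym β p → β = α) :
    ∀ (n : ℕ) (x : Grp k F), le x y → ¬ Occurs α (x⁻¹ * y) → len (x⁻¹ * y) ≤ n →
    len (x * p⁻¹) ≤ len (y * p⁻¹) := by
  intro n
  induction n with
  | zero =>
    intro x _ _ hlen
    have h0 : len (x⁻¹ * y) = 0 := Nat.le_zero.1 hlen
    have : x⁻¹ * y = 1 := eq_one_of_len_zero h0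
    have hxy : y = x := by
      have := inv_mul_eq_one.1 this
      rw [this]
    rw [hxy]
  | succ n ih =>
    intro x hxy hocc hlen
    obtain ⟨Z, hZred, hZprod⟩ := exists_red_word (x⁻¹ * y)
    cases Z with
    | nil =>
      have : x⁻¹ * y = 1 := by rw [← hZprod, wordProd_nil]
      have hyx : y = x := by
        have := inv_mul_eq_one.1 this
        rw [this]
      rw [hyx]
    | cons γ Z' =>
      obtain ⟨X, hXred, hXprod⟩ := exists_red_word x
      have hlenZ : len (x⁻¹ * y) = Z'.length + 1 := by
        rw [← hZprod, len_red hZred, List.length_cons]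
      have hleny : len y = X.length + (Z'.length + 1) := by
        rw [hxy, hlenZ, ← hXprod, len_red hXred]
      have hXZred : Red F (X ++ (γ :: Z')) := by
        apply min_red (x := y)
        · rw [wordProd_append, hXprod, hZprod]
          group
        · rw [List.length_append, List.length_cons, hleny]
      have hXγred : Red F (X ++ [γ]) := by
        have : X ++ (γ :: Z') = (X ++ [γ]) ++ Z' := by simp
        rw [this] at hXZred
        exact hXZred.of_append.1
      have hZ'red : Red F Z' := hZred.tail
      have hcntZ : cnt α (γ :: Z') = 0 := by
        have := (occurs_iff hZred hZprod α).not.1 hocc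
        omega
      have hγα : γ ≠ α := by
        intro e
        rw [cnt_cons] at hcntZ
        simp [e] at hcntZ
      have hcntZ' : cnt α Z' = 0 := by
        rw [cnt_cons] at hcntZ
        omega
      set x' := x * sym k F γ with hx'
      have hx'prod : wordProd k F (X ++ [γ]) = x' := by
        rw [wordProd_append, wordProd_singleton, hXprod]
      have hZ'prod : wordProd k F Z' = x'⁻¹ * y := by
        have h1 : sym k F γ * wordProd k F Z' = x⁻¹ * y := by
          rw [← hZprod, wordProd_cons]
        rw [hx', mul_inv_rev, mul_assoc, ← h1]
        group
      have hlenx' : len x' = X.length + 1 := by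
        rw [← hx'prod, len_red hXγred]
        simp
      have hlenx'y : len (x'⁻¹ * y) = Z'.length := by
        rw [← hZ'prod, len_red hZ'red]
      have hle' : le x' y := by
        unfold le
        rw [hlenx', hlenx'y, hleny]
        omega
      have hocc' : ¬ Occurs α (x'⁻¹ * y) := by
        rw [occurs_iff hZ'red hZ'prod α, hcntZ']
        omega
      have hstep : len (x * p⁻¹) ≤ len (x' * p⁻¹) := by
        have := claim_step hP hPp hpeak hγα hXγred
        rwa [hXprod, hx'prod] at this
      exact hstep.trans (ih x' hle' hocc' (by omega))


/-- if `x ≤ y` and `α` does not occur in `x⁻¹y`, then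
`|xp⁻¹| ≤ |yp⁻¹|` for each `α`-peak `p`. -/
theorem stmt15 {k : ℕ} (hk : 1 ≤ k) {F : Set (Sym2 (Fin k))}
    (α : Fin k × Bool) (x y : Grp k F)
    (hxy : le x y) (hocc : ¬ Occurs α (x⁻¹ * y))
    (p : Grp k F) (hp : AlphaPeak α p) :
    len (x * p⁻¹) ≤ len (y * p⁻¹) := by
  obtain ⟨P, hP, hPp⟩ := exists_red_word p
  exact stmt15_aux hP hPp hp.2 (len (x⁻¹ * y)) x hxy hocc (le_refl _)

end GraphGroupPaper
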